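/- For each t ∈ ℝ, let 𝔫_t be the 13-dimensional nilpotent Lie algebra with basis X₁,…,X₇, Y₁,…,Y₅, Z and nonzero basis brackets (up to antisymmetry) [X₁,X₂]=X₃, [X₁,X₃]=X₄, [X₁,X₄]=X₅, [X₁,X₅]=X₆, [X₁,X₆]=X₇, [X₂,X₃]=X₅, [X₂,X₄]=X₆, [X₂,X₅]=tX₇, [X₃,X₄]=(1−t)X₇, [Y₁,Y₂]=Y₃, [Y₁,Y₃]=Y₄, [Y₁,Y₄]=Y₅, [Y₂,Y₃]=Y₅, [X₁,Y₁]=Z, [X₂,Y₂]=Z. Then: (a) for each t, the diagonal map D = Diag(1,2,3,4,5,6,7,−1,−2,−3,−4,−5,0) (with respect to the ordered basis X₁,…,X₇,Y₁,…,Y₅,Z) is a derivation of 𝔫_t; (b) if there exists a Lie algebra isomorphism φ : 𝔫_s → 𝔫_t, then s = t; in particular the algebras 𝔫_t are pairwise non-isomorphic. -/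

import Mathlib

open scoped BigOperators

namespace RNPaper

/-- Structure constants of a skew-symmetric algebra on `ℝⁿ`:
an element of `V = Λ²(ℝⁿ)*⊗ℝⁿ` written in the basis `μ_{ijk}`. -/
abbrev SC (n : ℕ) := Fin n → Fin n → Fin n → ℝ

variable {n : ℕ}

def IsAntisym (c : SC n) : Prop := ∀ i j k, c j i k = - c i j k

/-- The bilinear map `ℝⁿ×ℝⁿ→ℝⁿ` associated to the structure constants `c`. -/
def br (c : SC n) (x y : Fin n → ℝ) : Fin n → ℝ :=
  fun k => ∑ i, ∑ j, x i * y j * c i j k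

def IsJacobi (c : SC n) : Prop :=
  ∀ x y z : Fin n → ℝ,
    br c (br c x y) z + br c (br c y z) x + br c (br c z x) y = 0

def nest (c : SC n) (v : ℕ → (Fin n → ℝ)) : ℕ → (Fin n → ℝ)
  | 0 => v 0
  | k + 1 => br c (v (k + 1)) (nest c v k)

def IsNilpotentBracket (c : SC n) : Prop :=
  ∃ N : ℕ, ∀ v : ℕ → (Fin n → ℝ), nest c v N = 0

/-- `c` is the Lie bracket of a nilpotent Lie algebra. -/
def IsNilpotentLie (c : SC n) : Prop := IsAntisym c ∧ IsJacobi c ∧ IsNilpotentBracket c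

/-- `D` is a derivation of the algebra with structure constants `c`. -/
def IsDeriv (c : SC n) (D : Matrix (Fin n) (Fin n) ℝ) : Prop :=
  ∀ x y : Fin n → ℝ,
    D.mulVec (br c x y) = br c (D.mulVec x) y + br c x (D.mulVec y)

/-- The inner product on `V` making the basis `μ_{ijk}` (`i<j`) orthonormal. -/
def innerV (c d : SC n) : ℝ := ∑ i, ∑ j, ∑ k, if i < j then c i j k * d i j k else 0

/-- The inner product `⟨A,B⟩ = tr(ABᵀ)` on matrices. -/
def innerM (A B : Matrix (Fin n) (Fin n) ℝ) : ℝ := ∑ a, ∑ b, A a b * B a b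

/-- The `gl(n,ℝ)`-action `E·μ = Eμ(·,·) − μ(E·,·) − μ(·,E·)`. -/
def lieAct (E : Matrix (Fin n) (Fin n) ℝ) (c : SC n) : SC n :=
  fun i j k => (∑ l, E k l * c i j l) - (∑ p, E p i * c p j k) - (∑ p, E p j * c i p k)

/-- The `GL(n,ℝ)`-action `(g·μ)(v,w) = g μ(g⁻¹v, g⁻¹w)` in structure constants. -/
def glAct (g : GL (Fin n) ℝ) (c : SC n) : SC n :=
  fun i j k => ∑ p, ∑ q, ∑ l,
    ((g⁻¹ : GL (Fin n) ℝ) : Matrix (Fin n) (Fin n) ℝ) p i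
      * ((g⁻¹ : GL (Fin n) ℝ) : Matrix (Fin n) (Fin n) ℝ) q j
      * ((g : Matrix (Fin n) (Fin n) ℝ) k l) * c p q l

/-- `m` is the moment map: `⟨m(μ),E⟩ = |μ|⁻²⟨E·μ,μ⟩` for all symmetric `E` and `μ ≠ 0`,
with `m(μ)` a symmetric matrix. -/
def IsMomentMap (m : SC n → Matrix (Fin n) (Fin n) ℝ) : Prop :=
  ∀ c : SC n, c ≠ 0 →
    (m c).IsSymm ∧
      ∀ E : Matrix (Fin n) (Fin n) ℝ, E.IsSymm →
        innerM (m c) E = (innerV c c)⁻¹ * innerV (lieAct E c) c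

/-- The centralizer of `D` in `GL(n,ℝ)`. -/
def centralizerSet (D : Matrix (Fin n) (Fin n) ℝ) : Set (GL (Fin n) ℝ) :=
  {g | (g : Matrix (Fin n) (Fin n) ℝ) * D = D * (g : Matrix (Fin n) (Fin n) ℝ)}

lemma one_mem_centralizerSet (D : Matrix (Fin n) (Fin n) ℝ) :
    (1 : GL (Fin n) ℝ) ∈ centralizerSet D := by
  simp [centralizerSet]

/-- `G_D`: the identity component of the centralizer of `D` in `GL(n,ℝ)`. -/
def GD (D : Matrix (Fin n) (Fin n) ℝ) : Set (GL (Fin n) ℝ) :=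
  Subtype.val '' connectedComponent (⟨1, one_mem_centralizerSet D⟩ : centralizerSet D)

/-- The orbit of `c` under a set `S ⊆ GL(n,ℝ)`. -/
def orbitOf (S : Set (GL (Fin n) ℝ)) (c : SC n) : Set (SC n) :=
  (fun g => glAct g c) '' S

noncomputable def diagAct (d : Fin n → ℝ) (c : SC n) : SC n :=
  fun i j k => (d k / (d i * d j)) * c i j k

/-- The orbit `T·μ` of the subgroup of diagonal matrices with positive entries. -/
def Torbit (c : SC n) : Set (SC n) :=
  {x | ∃ d : Fin n → ℝ, (∀ i, 0 < d i) ∧ x = diagAct d c}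

/-- The weight `F_{ij}^k = E_kk − E_ii − E_jj`. -/
def Fwt (i j k : Fin n) : Matrix (Fin n) (Fin n) ℝ :=
  Matrix.single k k 1 - Matrix.single i i 1 - Matrix.single j j 1

/-- `CH_μ`: the convex hull of the weights of `μ`. -/
def CHmu (c : SC n) : Set (Matrix (Fin n) (Fin n) ℝ) :=
  convexHull ℝ {M | ∃ i j k : Fin n, i < j ∧ c i j k ≠ 0 ∧ M = Fwt i j k}

/-- The diagonal part of a matrix. -/
def diagPart (A : Matrix (Fin n) (Fin n) ℝ) : Matrix (Fin n) (Fin n) ℝ :=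
  Matrix.diagonal fun i => A i i

/-- Membership in `𝔱ⁿ_{>0}`, the diagonal matrices with positive diagonal entries. -/
def DiagPos (E : Matrix (Fin n) (Fin n) ℝ) : Prop :=
  ∃ d : Fin n → ℝ, (∀ i, 0 < d i) ∧ E = Matrix.diagonal d

/-- The basis is nice for the bracket `c`. -/
def IsNice (c : SC n) : Prop :=
  (∀ i j k l, c i j k ≠ 0 → c i j l ≠ 0 → k = l) ∧
  ∀ i j r s k, c i j k ≠ 0 → c r s k ≠ 0 →
    ({i, j} : Finset (Fin n)) = {r, s} ∨
      Disjoint ({i, j} : Finset (Fin n)) ({r, s} : Finset (Fin n))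

/-- `A` is diagonalizable over `ℝ`. -/
def IsDiagonalizableR {N : ℕ} (A : Matrix (Fin N) (Fin N) ℝ) : Prop :=
  ∃ g : GL (Fin N) ℝ, ∃ d : Fin N → ℝ,
    A = (g : Matrix (Fin N) (Fin N) ℝ) * Matrix.diagonal d
      * ((g⁻¹ : GL (Fin N) ℝ) : Matrix (Fin N) (Fin N) ℝ)

/-- `D` extended by zero to `𝔰_D = ℝf ⊕ 𝔫` (index `0` corresponds to `f`). -/
def Dext (D : Matrix (Fin n) (Fin n) ℝ) : Matrix (Fin (n + 1)) (Fin (n + 1)) ℝ :=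
  Matrix.of (Fin.cons (fun _ => (0 : ℝ)) (fun k => Fin.cons (0 : ℝ) (fun j => D k j)))

/-- The bracket of `𝔫` extended by zero to `𝔰_D = ℝf ⊕ 𝔫`. -/
def cext (c : SC n) : SC (n + 1) :=
  Fin.cons (fun _ _ => 0)
    (fun i => Fin.cons (fun _ => 0) (fun j => Fin.cons 0 (fun k => c i j k)))

/-- Structure constants of the solvable extension `𝔰_D = ℝf ⊕ 𝔫`, `[f,X] = D X`. -/
def solvSC (D : Matrix (Fin n) (Fin n) ℝ) (c : SC n) : SC (n + 1) :=
  fun i j k =>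
    (if i = 0 then Dext D k j else 0) - (if j = 0 then Dext D k i else 0) + cext c i j k

/-- The matrix of `ad X`. -/
def adM {N : ℕ} (γ : SC N) (X : Fin N → ℝ) : Matrix (Fin N) (Fin N) ℝ :=
  Matrix.of fun k j => ∑ i, X i * γ i j k

/-- The bilinear form with Gram matrix `P`. -/
def bip {N : ℕ} (P : Matrix (Fin N) (Fin N) ℝ) (x y : Fin N → ℝ) : ℝ :=
  dotProduct x (P.mulVec y)

/-- `⟨Ric X,Y⟩` computed via the orthonormal basis `u`:
`−½Σ⟨[X,uₐ],[Y,uₐ]⟩ + ¼ΣΣ⟨[uₐ,u_b],X⟩⟨[uₐ,u_b],Y⟩ − ½ tr(ad X ∘ ad Y)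
 − ½(⟨[H,X],Y⟩+⟨[H,Y],X⟩)`. -/
noncomputable def ricForm {N : ℕ} (γ : SC N) (P : Matrix (Fin N) (Fin N) ℝ)
    (u : Fin N → (Fin N → ℝ)) (H : Fin N → ℝ) (X Y : Fin N → ℝ) : ℝ :=
  -(1 / 2) * (∑ a, bip P (br γ X (u a)) (br γ Y (u a)))
    + (1 / 4) * (∑ a, ∑ b, bip P (br γ (u a) (u b)) X * bip P (br γ (u a) (u b)) Y)
    - (1 / 2) * Matrix.trace (adM γ X * adM γ Y)
    - (1 / 2) * (bip P (br γ H X) Y + bip P (br γ H Y) X)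

/-- `D` is a Ricci negative derivation of `𝔫`: the solvable extension `𝔰_D = ℝf ⊕ 𝔫`
admits an inner product (with Gram matrix `P`) such that `f ⟂ 𝔫`, `D` is symmetric,
and the Ricci operator is negative definite. -/
def IsRicciNegative (c : SC n) (D : Matrix (Fin n) (Fin n) ℝ) : Prop :=
  ∃ P : Matrix (Fin (n + 1)) (Fin (n + 1)) ℝ, P.PosDef ∧
    (∀ j : Fin n, P 0 j.succ = 0) ∧
    (Dext D).transpose * P = P * Dext D ∧
    ∃ u : Fin (n + 1) → (Fin (n + 1) → ℝ),
      (∀ a b, bip P (u a) (u b) = if a = b then 1 else 0) ∧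
      ∃ H : Fin (n + 1) → ℝ,
        (∀ X : Fin (n + 1) → ℝ, bip P H X = Matrix.trace (adM (solvSC D c) X)) ∧
        ∀ X : Fin (n + 1) → ℝ, X ≠ 0 → ricForm (solvSC D c) P u H X X < 0

/-- The bracket `[e_i,e_j] = v e_k` (and `[e_j,e_i] = −v e_k`) as an element of `V`. -/
def brk {N : ℕ} (i j k : Fin N) (v : ℝ) : SC N :=
  fun p q r =>
    if p = i ∧ q = j ∧ r = k then v else if p = j ∧ q = i ∧ r = k then -v else 0


/-- Proposition 4.3 (iii): the family `𝔫_t`; basis `X₁,…,X₇ = e₀,…,e₆`,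
`Y₁,…,Y₅ = e₇,…,e₁₁`, `Z = e₁₂`. -/
noncomputable def c17 (t : ℝ) : SC 13 :=
  brk 0 1 2 1 + brk 0 2 3 1 + brk 0 3 4 1 + brk 0 4 5 1 + brk 0 5 6 1 +
    brk 1 2 4 1 + brk 1 3 5 1 + brk 1 4 6 t + brk 2 3 6 (1 - t) +
    brk 7 8 9 1 + brk 7 9 10 1 + brk 7 10 11 1 + brk 8 9 11 1 +
    brk 0 7 12 1 + brk 1 8 12 1

noncomputable def D17 : Matrix (Fin 13) (Fin 13) ℝ :=
  Matrix.diagonal ![1, 2, 3, 4, 5, 6, 7, -1, -2, -3, -4, -5, 0]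


private lemma br_add (c d : SC n) (x y : Fin n → ℝ) :
    br (c + d) x y = br c x y + br d x y := by
  funext k
  simp [br, mul_add, Finset.sum_add_distrib]

private lemma br_brk {N : ℕ} (i j k : Fin N) (hij : i ≠ j) (v : ℝ) (x y : Fin N → ℝ) :
    br (brk i j k v) x y = fun r => if r = k then v * (x i * y j - x j * y i) else 0 := by
  funext r
  rcases eq_or_ne r k with hr | hr
  · subst hr
    have hterm : ∀ p q : Fin N, x p * y q * brk i j r v p q r =
        (if p = i then if q = j then x i * y j * v else 0 else 0)
        + (if p = j then if q = i then -(x j * y i * v) else 0 else 0) := by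
      intro p q
      simp only [brk]
      by_cases h1 : p = i <;> by_cases h2 : q = j <;> by_cases h3 : p = j <;>
        by_cases h4 : q = i <;> simp_all
    simp only [br, hterm, Finset.sum_add_distrib, Finset.sum_ite_irrel, Finset.sum_ite_eq',
      Finset.mem_univ, if_true, Finset.sum_const_zero]
    ring
  · simp [br, brk, hr]

private lemma br_c17_apply (t : ℝ) (x y : Fin 13 → ℝ) (r : Fin 13) :
    br (c17 t) x y r =
      (if r = 2 then x 0 * y 1 - x 1 * y 0 else 0)
      + (if r = 3 then x 0 * y 2 - x 2 * y 0 else 0)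
      + (if r = 4 then x 0 * y 3 - x 3 * y 0 + (x 1 * y 2 - x 2 * y 1) else 0)
      + (if r = 5 then x 0 * y 4 - x 4 * y 0 + (x 1 * y 3 - x 3 * y 1) else 0)
      + (if r = 6 then x 0 * y 5 - x 5 * y 0 + t * (x 1 * y 4 - x 4 * y 1)
            + (1 - t) * (x 2 * y 3 - x 3 * y 2) else 0)
      + (if r = 9 then x 7 * y 8 - x 8 * y 7 else 0)
      + (if r = 10 then x 7 * y 9 - x 9 * y 7 else 0)
      + (if r = 11 then x 7 * y 10 - x 10 * y 7 + (x 8 * y 9 - x 9 * y 8) else 0)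
      + (if r = 12 then x 0 * y 7 - x 7 * y 0 + (x 1 * y 8 - x 8 * y 1) else 0) := by
  have h : br (c17 t) x y =
      br (brk 0 1 2 1) x y + br (brk 0 2 3 1) x y + br (brk 0 3 4 1) x y
      + br (brk 0 4 5 1) x y + br (brk 0 5 6 1) x y + br (brk 1 2 4 1) x y
      + br (brk 1 3 5 1) x y + br (brk 1 4 6 t) x y + br (brk 2 3 6 (1-t)) x y
      + br (brk 7 8 9 1) x y + br (brk 7 9 10 1) x y + br (brk 7 10 11 1) x y
      + br (brk 8 9 11 1) x y + br (brk 0 7 12 1) x y + br (brk 1 8 12 1) x y := by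
    simp only [c17, br_add]
  rw [h, br_brk 0 1 2 (by decide) 1 x y, br_brk 0 2 3 (by decide) 1 x y,
    br_brk 0 3 4 (by decide) 1 x y, br_brk 0 4 5 (by decide) 1 x y,
    br_brk 0 5 6 (by decide) 1 x y, br_brk 1 2 4 (by decide) 1 x y,
    br_brk 1 3 5 (by decide) 1 x y, br_brk 1 4 6 (by decide) t x y,
    br_brk 2 3 6 (by decide) (1-t) x y, br_brk 7 8 9 (by decide) 1 x y,
    br_brk 7 9 10 (by decide) 1 x y, br_brk 7 10 11 (by decide) 1 x y,
    br_brk 8 9 11 (by decide) 1 x y, br_brk 0 7 12 (by decide) 1 x y,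
    br_brk 1 8 12 (by decide) 1 x y]
  fin_cases r <;> simp (config := { decide := true })

private lemma dva0 : (![(1:ℝ),2,3,4,5,6,7,-1,-2,-3,-4,-5,0] : Fin 13 → ℝ) 0 = 1 := rfl
private lemma dva1 : (![(1:ℝ),2,3,4,5,6,7,-1,-2,-3,-4,-5,0] : Fin 13 → ℝ) 1 = 2 := rfl
private lemma dva2 : (![(1:ℝ),2,3,4,5,6,7,-1,-2,-3,-4,-5,0] : Fin 13 → ℝ) 2 = 3 := rfl
private lemma dva3 : (![(1:ℝ),2,3,4,5,6,7,-1,-2,-3,-4,-5,0] : Fin 13 → ℝ) 3 = 4 := rfl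
private lemma dva4 : (![(1:ℝ),2,3,4,5,6,7,-1,-2,-3,-4,-5,0] : Fin 13 → ℝ) 4 = 5 := rfl
private lemma dva5 : (![(1:ℝ),2,3,4,5,6,7,-1,-2,-3,-4,-5,0] : Fin 13 → ℝ) 5 = 6 := rfl
private lemma dva6 : (![(1:ℝ),2,3,4,5,6,7,-1,-2,-3,-4,-5,0] : Fin 13 → ℝ) 6 = 7 := rfl
private lemma dva7 : (![(1:ℝ),2,3,4,5,6,7,-1,-2,-3,-4,-5,0] : Fin 13 → ℝ) 7 = (-1) := rfl
private lemma dva8 : (![(1:ℝ),2,3,4,5,6,7,-1,-2,-3,-4,-5,0] : Fin 13 → ℝ) 8 = (-2) := rfl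
private lemma dva9 : (![(1:ℝ),2,3,4,5,6,7,-1,-2,-3,-4,-5,0] : Fin 13 → ℝ) 9 = (-3) := rfl
private lemma dva10 : (![(1:ℝ),2,3,4,5,6,7,-1,-2,-3,-4,-5,0] : Fin 13 → ℝ) 10 = (-4) := rfl
private lemma dva11 : (![(1:ℝ),2,3,4,5,6,7,-1,-2,-3,-4,-5,0] : Fin 13 → ℝ) 11 = (-5) := rfl
private lemma dva12 : (![(1:ℝ),2,3,4,5,6,7,-1,-2,-3,-4,-5,0] : Fin 13 → ℝ) 12 = 0 := rfl

private lemma D17_apply (x : Fin 13 → ℝ) (i : Fin 13) :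
    D17.mulVec x i = (![(1:ℝ),2,3,4,5,6,7,-1,-2,-3,-4,-5,0] : Fin 13 → ℝ) i * x i := by
  rw [D17]; exact Matrix.mulVec_diagonal _ _ _

set_option maxHeartbeats 1000000 in
private lemma part_a (t : ℝ) (x y : Fin 13 → ℝ) :
    D17.mulVec (br (c17 t) x y) = br (c17 t) (D17.mulVec x) y + br (c17 t) x (D17.mulVec y) := by
  funext k
  rw [Pi.add_apply, D17_apply, br_c17_apply, br_c17_apply, br_c17_apply]
  simp only [D17_apply, dva0, dva1, dva2, dva3, dva4, dva5, dva6, dva7, dva8, dva9, dva10, dva11, dva12]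
  fin_cases k <;>
    simp (config := { decide := true }) [dva0, dva1, dva2, dva3, dva4, dva5, dva6, dva7, dva8, dva9, dva10, dva11, dva12] <;> ring

private lemma cv01 (t : ℝ) :
    br (c17 t) (Pi.single (0 : Fin 13) (1 : ℝ)) (Pi.single (1 : Fin 13) (1 : ℝ)) =
      Pi.single (2 : Fin 13) (1 : ℝ) := by
  funext r
  rw [br_c17_apply]
  fin_cases r <;> simp (config := { decide := true }) [Pi.single_apply]

private lemma cv02 (t : ℝ) :
    br (c17 t) (Pi.single (0 : Fin 13) (1 : ℝ)) (Pi.single (2 : Fin 13) (1 : ℝ)) =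
      Pi.single (3 : Fin 13) (1 : ℝ) := by
  funext r
  rw [br_c17_apply]
  fin_cases r <;> simp (config := { decide := true }) [Pi.single_apply]

private lemma cv03 (t : ℝ) :
    br (c17 t) (Pi.single (0 : Fin 13) (1 : ℝ)) (Pi.single (3 : Fin 13) (1 : ℝ)) =
      Pi.single (4 : Fin 13) (1 : ℝ) := by
  funext r
  rw [br_c17_apply]
  fin_cases r <;> simp (config := { decide := true }) [Pi.single_apply]

private lemma cv04 (t : ℝ) :
    br (c17 t) (Pi.single (0 : Fin 13) (1 : ℝ)) (Pi.single (4 : Fin 13) (1 : ℝ)) =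
      Pi.single (5 : Fin 13) (1 : ℝ) := by
  funext r
  rw [br_c17_apply]
  fin_cases r <;> simp (config := { decide := true }) [Pi.single_apply]

private lemma cv05 (t : ℝ) :
    br (c17 t) (Pi.single (0 : Fin 13) (1 : ℝ)) (Pi.single (5 : Fin 13) (1 : ℝ)) =
      Pi.single (6 : Fin 13) (1 : ℝ) := by
  funext r
  rw [br_c17_apply]
  fin_cases r <;> simp (config := { decide := true }) [Pi.single_apply]

private lemma cv12 (t : ℝ) :
    br (c17 t) (Pi.single (1 : Fin 13) (1 : ℝ)) (Pi.single (2 : Fin 13) (1 : ℝ)) =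
      Pi.single (4 : Fin 13) (1 : ℝ) := by
  funext r
  rw [br_c17_apply]
  fin_cases r <;> simp (config := { decide := true }) [Pi.single_apply]

private lemma cv14 (t : ℝ) :
    br (c17 t) (Pi.single (1 : Fin 13) (1 : ℝ)) (Pi.single (4 : Fin 13) (1 : ℝ)) =
      Pi.single (6 : Fin 13) t := by
  funext r
  rw [br_c17_apply]
  fin_cases r <;> simp (config := { decide := true }) [Pi.single_apply]


theorem statement17 :
    (∀ t : ℝ, IsDeriv (c17 t) D17) ∧
    ∀ s t : ℝ,
      (∃ g : GL (Fin 13) ℝ, ∀ x y : Fin 13 → ℝ,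
        (g : Matrix (Fin 13) (Fin 13) ℝ).mulVec (br (c17 s) x y) =
          br (c17 t) ((g : Matrix (Fin 13) (Fin 13) ℝ).mulVec x)
            ((g : Matrix (Fin 13) (Fin 13) ℝ).mulVec y)) → s = t := by
  constructor
  · intro t x y
    exact part_a t x y
  · rintro s t ⟨g, hg⟩
    set M : Matrix (Fin 13) (Fin 13) ℝ := (g : Matrix (Fin 13) (Fin 13) ℝ) with hM
    have hinj : ∀ x : Fin 13 → ℝ, M.mulVec x = 0 → x = 0 := by
      intro x hx
      have h1 : ((g⁻¹ : GL (Fin 13) ℝ) : Matrix (Fin 13) (Fin 13) ℝ).mulVec (M.mulVec x) = x := by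
        rw [Matrix.mulVec_mulVec, hM]
        rw [show ((g⁻¹ : GL (Fin 13) ℝ) : Matrix (Fin 13) (Fin 13) ℝ) *
            (g : Matrix (Fin 13) (Fin 13) ℝ) = 1 from g.inv_mul, Matrix.one_mulVec]
      rw [hx, Matrix.mulVec_zero] at h1
      exact h1.symm
    have colE : ∀ j : Fin 13, M.mulVec (Pi.single j 1) = fun i => M i j := by
      intro j
      rw [Matrix.mulVec_single]
      funext i
      exact mul_one _
    have key : ∀ i j : Fin 13,
        M.mulVec (br (c17 s) (Pi.single i 1) (Pi.single j 1)) =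
          br (c17 t) (fun r => M r i) (fun r => M r j) := by
      intro i j
      have h := hg (Pi.single i 1) (Pi.single j 1)
      rw [colE, colE] at h
      exact h
    have h2 : (fun r => M r 2) = br (c17 t) (fun r => M r 0) (fun r => M r 1) := by
      have h := key 0 1
      rwa [cv01, colE] at h
    have h3 : (fun r => M r 3) = br (c17 t) (fun r => M r 0) (fun r => M r 2) := by
      have h := key 0 2
      rwa [cv02, colE] at h
    have h4 : (fun r => M r 4) = br (c17 t) (fun r => M r 0) (fun r => M r 3) := by
      have h := key 0 3
      rwa [cv03, colE] at h
    have h5 : (fun r => M r 5) = br (c17 t) (fun r => M r 0) (fun r => M r 4) := by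
      have h := key 0 4
      rwa [cv04, colE] at h
    have h6 : (fun r => M r 6) = br (c17 t) (fun r => M r 0) (fun r => M r 5) := by
      have h := key 0 5
      rwa [cv05, colE] at h
    have h24 : (fun r => M r 4) = br (c17 t) (fun r => M r 1) (fun r => M r 2) := by
      have h := key 1 2
      rwa [cv12, colE] at h
    have hs6 : (fun r => M r 6 * s) = br (c17 t) (fun r => M r 1) (fun r => M r 4) := by
      have h := key 1 4
      rwa [cv14, Matrix.mulVec_single] at h
    have raw_2_0 : M 0 2 = 0 := by
      have h := congrFun h2 0
      rw [br_c17_apply] at h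
      simp (config := { decide := true }) only [Pi.smul_apply, smul_eq_mul, if_true, if_false,
        add_zero, zero_add] at h
      exact h
    have raw_2_1 : M 1 2 = 0 := by
      have h := congrFun h2 1
      rw [br_c17_apply] at h
      simp (config := { decide := true }) only [Pi.smul_apply, smul_eq_mul, if_true, if_false,
        add_zero, zero_add] at h
      exact h
    have raw_2_2 : M 2 2 = M 0 0 * M 1 1 - M 1 0 * M 0 1 := by
      have h := congrFun h2 2
      rw [br_c17_apply] at h
      simp (config := { decide := true }) only [Pi.smul_apply, smul_eq_mul, if_true, if_false,
        add_zero, zero_add] at h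
      exact h
    have raw_2_7 : M 7 2 = 0 := by
      have h := congrFun h2 7
      rw [br_c17_apply] at h
      simp (config := { decide := true }) only [Pi.smul_apply, smul_eq_mul, if_true, if_false,
        add_zero, zero_add] at h
      exact h
    have raw_2_8 : M 8 2 = 0 := by
      have h := congrFun h2 8
      rw [br_c17_apply] at h
      simp (config := { decide := true }) only [Pi.smul_apply, smul_eq_mul, if_true, if_false,
        add_zero, zero_add] at h
      exact h
    have raw_3_0 : M 0 3 = 0 := by
      have h := congrFun h3 0
      rw [br_c17_apply] at h
      simp (config := { decide := true }) only [Pi.smul_apply, smul_eq_mul, if_true, if_false,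
        add_zero, zero_add] at h
      exact h
    have raw_3_1 : M 1 3 = 0 := by
      have h := congrFun h3 1
      rw [br_c17_apply] at h
      simp (config := { decide := true }) only [Pi.smul_apply, smul_eq_mul, if_true, if_false,
        add_zero, zero_add] at h
      exact h
    have raw_3_2 : M 2 3 = M 0 0 * M 1 2 - M 1 0 * M 0 2 := by
      have h := congrFun h3 2
      rw [br_c17_apply] at h
      simp (config := { decide := true }) only [Pi.smul_apply, smul_eq_mul, if_true, if_false,
        add_zero, zero_add] at h
      exact h
    have raw_3_3 : M 3 3 = M 0 0 * M 2 2 - M 2 0 * M 0 2 := by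
      have h := congrFun h3 3
      rw [br_c17_apply] at h
      simp (config := { decide := true }) only [Pi.smul_apply, smul_eq_mul, if_true, if_false,
        add_zero, zero_add] at h
      exact h
    have raw_3_7 : M 7 3 = 0 := by
      have h := congrFun h3 7
      rw [br_c17_apply] at h
      simp (config := { decide := true }) only [Pi.smul_apply, smul_eq_mul, if_true, if_false,
        add_zero, zero_add] at h
      exact h
    have raw_3_8 : M 8 3 = 0 := by
      have h := congrFun h3 8
      rw [br_c17_apply] at h
      simp (config := { decide := true }) only [Pi.smul_apply, smul_eq_mul, if_true, if_false,
        add_zero, zero_add] at h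
      exact h
    have raw_4_0 : M 0 4 = 0 := by
      have h := congrFun h4 0
      rw [br_c17_apply] at h
      simp (config := { decide := true }) only [Pi.smul_apply, smul_eq_mul, if_true, if_false,
        add_zero, zero_add] at h
      exact h
    have raw_4_1 : M 1 4 = 0 := by
      have h := congrFun h4 1
      rw [br_c17_apply] at h
      simp (config := { decide := true }) only [Pi.smul_apply, smul_eq_mul, if_true, if_false,
        add_zero, zero_add] at h
      exact h
    have raw_4_2 : M 2 4 = M 0 0 * M 1 3 - M 1 0 * M 0 3 := by
      have h := congrFun h4 2
      rw [br_c17_apply] at h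
      simp (config := { decide := true }) only [Pi.smul_apply, smul_eq_mul, if_true, if_false,
        add_zero, zero_add] at h
      exact h
    have raw_4_3 : M 3 4 = M 0 0 * M 2 3 - M 2 0 * M 0 3 := by
      have h := congrFun h4 3
      rw [br_c17_apply] at h
      simp (config := { decide := true }) only [Pi.smul_apply, smul_eq_mul, if_true, if_false,
        add_zero, zero_add] at h
      exact h
    have raw_4_4 : M 4 4 = M 0 0 * M 3 3 - M 3 0 * M 0 3 + (M 1 0 * M 2 3 - M 2 0 * M 1 3) := by
      have h := congrFun h4 4
      rw [br_c17_apply] at h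
      simp (config := { decide := true }) only [Pi.smul_apply, smul_eq_mul, if_true, if_false,
        add_zero, zero_add] at h
      exact h
    have raw_4_7 : M 7 4 = 0 := by
      have h := congrFun h4 7
      rw [br_c17_apply] at h
      simp (config := { decide := true }) only [Pi.smul_apply, smul_eq_mul, if_true, if_false,
        add_zero, zero_add] at h
      exact h
    have raw_4_8 : M 8 4 = 0 := by
      have h := congrFun h4 8
      rw [br_c17_apply] at h
      simp (config := { decide := true }) only [Pi.smul_apply, smul_eq_mul, if_true, if_false,
        add_zero, zero_add] at h
      exact h
    have raw_4_9 : M 9 4 = M 7 0 * M 8 3 - M 8 0 * M 7 3 := by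
      have h := congrFun h4 9
      rw [br_c17_apply] at h
      simp (config := { decide := true }) only [Pi.smul_apply, smul_eq_mul, if_true, if_false,
        add_zero, zero_add] at h
      exact h
    have raw_5_0 : M 0 5 = 0 := by
      have h := congrFun h5 0
      rw [br_c17_apply] at h
      simp (config := { decide := true }) only [Pi.smul_apply, smul_eq_mul, if_true, if_false,
        add_zero, zero_add] at h
      exact h
    have raw_5_1 : M 1 5 = 0 := by
      have h := congrFun h5 1
      rw [br_c17_apply] at h
      simp (config := { decide := true }) only [Pi.smul_apply, smul_eq_mul, if_true, if_false,
        add_zero, zero_add] at h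
      exact h
    have raw_5_2 : M 2 5 = M 0 0 * M 1 4 - M 1 0 * M 0 4 := by
      have h := congrFun h5 2
      rw [br_c17_apply] at h
      simp (config := { decide := true }) only [Pi.smul_apply, smul_eq_mul, if_true, if_false,
        add_zero, zero_add] at h
      exact h
    have raw_5_3 : M 3 5 = M 0 0 * M 2 4 - M 2 0 * M 0 4 := by
      have h := congrFun h5 3
      rw [br_c17_apply] at h
      simp (config := { decide := true }) only [Pi.smul_apply, smul_eq_mul, if_true, if_false,
        add_zero, zero_add] at h
      exact h
    have raw_5_4 : M 4 5 = M 0 0 * M 3 4 - M 3 0 * M 0 4 + (M 1 0 * M 2 4 - M 2 0 * M 1 4) := by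
      have h := congrFun h5 4
      rw [br_c17_apply] at h
      simp (config := { decide := true }) only [Pi.smul_apply, smul_eq_mul, if_true, if_false,
        add_zero, zero_add] at h
      exact h
    have raw_5_5 : M 5 5 = M 0 0 * M 4 4 - M 4 0 * M 0 4 + (M 1 0 * M 3 4 - M 3 0 * M 1 4) := by
      have h := congrFun h5 5
      rw [br_c17_apply] at h
      simp (config := { decide := true }) only [Pi.smul_apply, smul_eq_mul, if_true, if_false,
        add_zero, zero_add] at h
      exact h
    have raw_5_7 : M 7 5 = 0 := by
      have h := congrFun h5 7
      rw [br_c17_apply] at h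
      simp (config := { decide := true }) only [Pi.smul_apply, smul_eq_mul, if_true, if_false,
        add_zero, zero_add] at h
      exact h
    have raw_5_8 : M 8 5 = 0 := by
      have h := congrFun h5 8
      rw [br_c17_apply] at h
      simp (config := { decide := true }) only [Pi.smul_apply, smul_eq_mul, if_true, if_false,
        add_zero, zero_add] at h
      exact h
    have raw_5_9 : M 9 5 = M 7 0 * M 8 4 - M 8 0 * M 7 4 := by
      have h := congrFun h5 9
      rw [br_c17_apply] at h
      simp (config := { decide := true }) only [Pi.smul_apply, smul_eq_mul, if_true, if_false,
        add_zero, zero_add] at h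
      exact h
    have raw_5_10 : M 10 5 = M 7 0 * M 9 4 - M 9 0 * M 7 4 := by
      have h := congrFun h5 10
      rw [br_c17_apply] at h
      simp (config := { decide := true }) only [Pi.smul_apply, smul_eq_mul, if_true, if_false,
        add_zero, zero_add] at h
      exact h
    have raw_6_0 : M 0 6 = 0 := by
      have h := congrFun h6 0
      rw [br_c17_apply] at h
      simp (config := { decide := true }) only [Pi.smul_apply, smul_eq_mul, if_true, if_false,
        add_zero, zero_add] at h
      exact h
    have raw_6_1 : M 1 6 = 0 := by
      have h := congrFun h6 1
      rw [br_c17_apply] at h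
      simp (config := { decide := true }) only [Pi.smul_apply, smul_eq_mul, if_true, if_false,
        add_zero, zero_add] at h
      exact h
    have raw_6_2 : M 2 6 = M 0 0 * M 1 5 - M 1 0 * M 0 5 := by
      have h := congrFun h6 2
      rw [br_c17_apply] at h
      simp (config := { decide := true }) only [Pi.smul_apply, smul_eq_mul, if_true, if_false,
        add_zero, zero_add] at h
      exact h
    have raw_6_3 : M 3 6 = M 0 0 * M 2 5 - M 2 0 * M 0 5 := by
      have h := congrFun h6 3
      rw [br_c17_apply] at h
      simp (config := { decide := true }) only [Pi.smul_apply, smul_eq_mul, if_true, if_false,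
        add_zero, zero_add] at h
      exact h
    have raw_6_4 : M 4 6 = M 0 0 * M 3 5 - M 3 0 * M 0 5 + (M 1 0 * M 2 5 - M 2 0 * M 1 5) := by
      have h := congrFun h6 4
      rw [br_c17_apply] at h
      simp (config := { decide := true }) only [Pi.smul_apply, smul_eq_mul, if_true, if_false,
        add_zero, zero_add] at h
      exact h
    have raw_6_5 : M 5 6 = M 0 0 * M 4 5 - M 4 0 * M 0 5 + (M 1 0 * M 3 5 - M 3 0 * M 1 5) := by
      have h := congrFun h6 5
      rw [br_c17_apply] at h
      simp (config := { decide := true }) only [Pi.smul_apply, smul_eq_mul, if_true, if_false,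
        add_zero, zero_add] at h
      exact h
    have raw_6_6 : M 6 6 = M 0 0 * M 5 5 - M 5 0 * M 0 5 + t * (M 1 0 * M 4 5 - M 4 0 * M 1 5) + (1 - t) * (M 2 0 * M 3 5 - M 3 0 * M 2 5) := by
      have h := congrFun h6 6
      rw [br_c17_apply] at h
      simp (config := { decide := true }) only [Pi.smul_apply, smul_eq_mul, if_true, if_false,
        add_zero, zero_add] at h
      exact h
    have raw_6_7 : M 7 6 = 0 := by
      have h := congrFun h6 7
      rw [br_c17_apply] at h
      simp (config := { decide := true }) only [Pi.smul_apply, smul_eq_mul, if_true, if_false,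
        add_zero, zero_add] at h
      exact h
    have raw_6_8 : M 8 6 = 0 := by
      have h := congrFun h6 8
      rw [br_c17_apply] at h
      simp (config := { decide := true }) only [Pi.smul_apply, smul_eq_mul, if_true, if_false,
        add_zero, zero_add] at h
      exact h
    have raw_6_9 : M 9 6 = M 7 0 * M 8 5 - M 8 0 * M 7 5 := by
      have h := congrFun h6 9
      rw [br_c17_apply] at h
      simp (config := { decide := true }) only [Pi.smul_apply, smul_eq_mul, if_true, if_false,
        add_zero, zero_add] at h
      exact h
    have raw_6_10 : M 10 6 = M 7 0 * M 9 5 - M 9 0 * M 7 5 := by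
      have h := congrFun h6 10
      rw [br_c17_apply] at h
      simp (config := { decide := true }) only [Pi.smul_apply, smul_eq_mul, if_true, if_false,
        add_zero, zero_add] at h
      exact h
    have raw_6_11 : M 11 6 = M 7 0 * M 10 5 - M 10 0 * M 7 5 + (M 8 0 * M 9 5 - M 9 0 * M 8 5) := by
      have h := congrFun h6 11
      rw [br_c17_apply] at h
      simp (config := { decide := true }) only [Pi.smul_apply, smul_eq_mul, if_true, if_false,
        add_zero, zero_add] at h
      exact h
    have raw_6_12 : M 12 6 = M 0 0 * M 7 5 - M 7 0 * M 0 5 + (M 1 0 * M 8 5 - M 8 0 * M 1 5) := by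
      have h := congrFun h6 12
      rw [br_c17_apply] at h
      simp (config := { decide := true }) only [Pi.smul_apply, smul_eq_mul, if_true, if_false,
        add_zero, zero_add] at h
      exact h
    have raw24_4 : M 4 4 = M 0 1 * M 3 2 - M 3 1 * M 0 2 + (M 1 1 * M 2 2 - M 2 1 * M 1 2) := by
      have h := congrFun h24 4
      rw [br_c17_apply] at h
      simp (config := { decide := true }) only [Pi.smul_apply, smul_eq_mul, if_true, if_false,
        add_zero, zero_add] at h
      exact h
    have rawK_5 : M 5 6 * s = M 0 1 * M 4 4 - M 4 1 * M 0 4 + (M 1 1 * M 3 4 - M 3 1 * M 1 4) := by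
      have h := congrFun hs6 5
      rw [br_c17_apply] at h
      simp (config := { decide := true }) only [Pi.smul_apply, smul_eq_mul, if_true, if_false,
        add_zero, zero_add] at h
      exact h
    have rawK_6 : M 6 6 * s = M 0 1 * M 5 4 - M 5 1 * M 0 4 + t * (M 1 1 * M 4 4 - M 4 1 * M 1 4) + (1 - t) * (M 2 1 * M 3 4 - M 3 1 * M 2 4) := by
      have h := congrFun hs6 6
      rw [br_c17_apply] at h
      simp (config := { decide := true }) only [Pi.smul_apply, smul_eq_mul, if_true, if_false,
        add_zero, zero_add] at h
      exact h
    have z32 : M 2 3 = 0 := by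
      linear_combination raw_3_2 + M 0 0 * raw_2_1 - M 1 0 * raw_2_0
    have v33 : M 3 3 = M 0 0 * (M 0 0 * M 1 1 - M 1 0 * M 0 1) := by
      linear_combination raw_3_3 + M 0 0 * raw_2_2 - M 2 0 * raw_2_0
    have z42 : M 2 4 = 0 := by
      linear_combination raw_4_2 + M 0 0 * raw_3_1 - M 1 0 * raw_3_0
    have z43 : M 3 4 = 0 := by
      linear_combination raw_4_3 + M 0 0 * z32 - M 2 0 * raw_3_0
    have z49 : M 9 4 = 0 := by
      linear_combination raw_4_9 + M 7 0 * raw_3_8 - M 8 0 * raw_3_7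
    have v44 : M 4 4 = M 0 0 * (M 0 0 * (M 0 0 * M 1 1 - M 1 0 * M 0 1)) := by
      linear_combination raw_4_4 + M 0 0 * v33 - M 3 0 * raw_3_0 + M 1 0 * z32 - M 2 0 * raw_3_1
    have z52 : M 2 5 = 0 := by
      linear_combination raw_5_2 + M 0 0 * raw_4_1 - M 1 0 * raw_4_0
    have z53 : M 3 5 = 0 := by
      linear_combination raw_5_3 + M 0 0 * z42 - M 2 0 * raw_4_0
    have z54 : M 4 5 = 0 := by
      linear_combination raw_5_4 + M 0 0 * z43 - M 3 0 * raw_4_0 + M 1 0 * z42 - M 2 0 * raw_4_1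
    have z59 : M 9 5 = 0 := by
      linear_combination raw_5_9 + M 7 0 * raw_4_8 - M 8 0 * raw_4_7
    have z510 : M 10 5 = 0 := by
      linear_combination raw_5_10 + M 7 0 * z49 - M 9 0 * raw_4_7
    have v55 : M 5 5 = M 0 0 * (M 0 0 * (M 0 0 * (M 0 0 * M 1 1 - M 1 0 * M 0 1))) := by
      linear_combination raw_5_5 + M 0 0 * v44 - M 4 0 * raw_4_0 + M 1 0 * z43 - M 3 0 * raw_4_1
    have z62 : M 2 6 = 0 := by
      linear_combination raw_6_2 + M 0 0 * raw_5_1 - M 1 0 * raw_5_0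
    have z63 : M 3 6 = 0 := by
      linear_combination raw_6_3 + M 0 0 * z52 - M 2 0 * raw_5_0
    have z64 : M 4 6 = 0 := by
      linear_combination raw_6_4 + M 0 0 * z53 - M 3 0 * raw_5_0 + M 1 0 * z52 - M 2 0 * raw_5_1
    have z65 : M 5 6 = 0 := by
      linear_combination raw_6_5 + M 0 0 * z54 - M 4 0 * raw_5_0 + M 1 0 * z53 - M 3 0 * raw_5_1
    have v66 : M 6 6 = M 0 0 * (M 0 0 * (M 0 0 * (M 0 0 * (M 0 0 * M 1 1 - M 1 0 * M 0 1)))) := by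
      linear_combination raw_6_6 + M 0 0 * v55 - M 5 0 * raw_5_0 + t * M 1 0 * z54 - t * M 4 0 * raw_5_1 + (1 - t) * M 2 0 * z53 - (1 - t) * M 3 0 * z52
    have z69 : M 9 6 = 0 := by
      linear_combination raw_6_9 + M 7 0 * raw_5_8 - M 8 0 * raw_5_7
    have z610 : M 10 6 = 0 := by
      linear_combination raw_6_10 + M 7 0 * z59 - M 9 0 * raw_5_7
    have z611 : M 11 6 = 0 := by
      linear_combination raw_6_11 + M 7 0 * z510 - M 10 0 * raw_5_7 + M 8 0 * z59 - M 9 0 * raw_5_8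
    have z612 : M 12 6 = 0 := by
      linear_combination raw_6_12 + M 0 0 * raw_5_7 - M 7 0 * raw_5_0 + M 1 0 * raw_5_8 - M 8 0 * raw_5_1

    -- column 6 is (M 6 6) • e6 and M 6 6 ≠ 0
    have h66 : M 6 6 ≠ 0 := by
      intro h0
      have hz : (fun r => M r 6) = (0 : Fin 13 → ℝ) := by
        funext r
        fin_cases r
        exacts [raw_6_0, raw_6_1, z62, z63, z64, z65, h0, raw_6_7, raw_6_8, z69, z610, z611, z612]
      have hs : (Pi.single (6 : Fin 13) (1 : ℝ) : Fin 13 → ℝ) = 0 := by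
        apply hinj
        rw [colE 6, hz]
      have h1 : (Pi.single (6 : Fin 13) (1 : ℝ) : Fin 13 → ℝ) 6 = 0 := by rw [hs]; rfl
      rw [Pi.single_eq_same] at h1
      exact one_ne_zero h1
    have ha0 : M 0 0 ≠ 0 := by
      intro h; exact h66 (by rw [v66, h]; ring)
    have hpne : (M 0 0 * M 1 1 - M 1 0 * M 0 1) ≠ 0 := by
      intro h; exact h66 (by rw [v66, h]; ring)
    have hVne : (M 0 0 * (M 0 0 * (M 0 0 * M 1 1 - M 1 0 * M 0 1))) ≠ 0 := mul_ne_zero ha0 (mul_ne_zero ha0 hpne)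
    have hWne : (M 0 0 * (M 0 0 * (M 0 0 * (M 0 0 * (M 0 0 * M 1 1 - M 1 0 * M 0 1))))) ≠ 0 := mul_ne_zero ha0 (mul_ne_zero ha0 hVne)
    -- M 0 1 = 0
    have hb0' : M 0 1 * (M 0 0 * (M 0 0 * (M 0 0 * M 1 1 - M 1 0 * M 0 1))) = 0 := by
      linear_combination (-1 : ℝ) * rawK_5 + s * z65 - M 0 1 * v44 + M 4 1 * raw_4_0
        - M 1 1 * z43 + M 3 1 * raw_4_1
    have b0 : M 0 1 = 0 := by
      rcases mul_eq_zero.mp hb0' with h | h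
      · exact h
      · exact absurd h hVne
    -- M 1 1 = M 0 0 * M 0 0
    have hb1' : M 1 1 * (M 0 0 * M 1 1 - M 1 0 * M 0 1) = (M 0 0 * M 0 0) * (M 0 0 * M 1 1 - M 1 0 * M 0 1) := by
      linear_combination (-1 : ℝ) * raw24_4 + v44 - M 3 2 * b0 + M 3 1 * raw_2_0
        + M 2 1 * raw_2_1 - M 1 1 * raw_2_2
    have b1 : M 1 1 = M 0 0 * M 0 0 := mul_right_cancel₀ hpne hb1'
    -- conclude
    have hst : (s - t) * (M 0 0 * (M 0 0 * (M 0 0 * (M 0 0 * (M 0 0 * M 1 1 - M 1 0 * M 0 1))))) = 0 := by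
      linear_combination rawK_6 - s * v66 + M 5 4 * b0 - M 5 1 * raw_4_0 + t * M 4 4 * b1
        + t * (M 0 0 * M 0 0) * v44 - t * M 4 1 * raw_4_1 + (1 - t) * M 2 1 * z43
        - (1 - t) * M 3 1 * z42
    rcases mul_eq_zero.mp hst with h | h
    · exact sub_eq_zero.mp h
    · exact absurd h hWne


end RNPaper
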